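/- Uniqueness of record positions: if every server builds its sequence by the deduplicating fold over the same delivery order D, then every record r that appears does so at the same index in every server's sequence, for servers that have processed enough of D to contain r. -/

import Mathlib

def dedupFold {α : Type} [DecidableEq α] (D : List α) : List α :=
  D.foldl (fun acc r => if r ∈ acc then acc else acc ++ [r]) []

private lemma foldl_prefix {α : Type} [DecidableEq α] (l : List α) (acc : List α) :
    acc <+: l.foldl (fun acc r => if r ∈ acc then acc else acc ++ [r]) acc := by
  induction l generalizing acc with
  | nil => exact List.prefix_refl _
  | cons a t ih =>
    simp only [List.foldl_cons]
    refine List.IsPrefix.trans ?_ (ih _)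
    by_cases h : a ∈ acc <;> simp [h]

private lemma dedupFold_prefix {α : Type} [DecidableEq α] (D : List α) {k1 k2 : ℕ}
    (h : k1 ≤ k2) : dedupFold (D.take k1) <+: dedupFold (D.take k2) := by
  have hp := List.take_prefix k1 (D.take k2)
  rw [List.take_take, min_eq_left h] at hp
  obtain ⟨t, ht⟩ := hp
  simp only [dedupFold]
  rw [← ht, List.foldl_append]
  exact foldl_prefix _ _

theorem dedupFold_index_unique {α : Type} [DecidableEq α]
    (D : List α) (k1 k2 : ℕ) (r : α)
    (h1 : r ∈ dedupFold (D.take k1)) (h2 : r ∈ dedupFold (D.take k2)) :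
    (dedupFold (D.take k1)).idxOf r = (dedupFold (D.take k2)).idxOf r := by
  rcases le_total k1 k2 with h | h
  · obtain ⟨t, ht⟩ := dedupFold_prefix D h
    rw [← ht, List.idxOf_append_of_mem h1]
  · obtain ⟨t, ht⟩ := dedupFold_prefix D h
    rw [← ht, List.idxOf_append_of_mem h2]
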